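/- For \ell = n = 2, the set \mathcal{Q}(2,2) of pairs (\lambda; \nu) \in \mathcal{P} \times \mathcal{P}_2 with res_2(\lambda) + sres_2(\nu) = 2\delta has exactly 41 elements, while the subset with \nu = \emptyset (i.e. \mathcal{P}_2(2), bipartitions of 2) has exactly 5 elements. -/

import Mathlib

/-!
STATEMENT 17: For `ℓ = n = 2`, the set `𝒬(2,2)` of pairs `(λ;ν)` with
`res₂(λ) + sres₂(ν) = 2δ` has exactly 41 elements, while its subset with `ν = ∅`
(i.e. `𝒫₂(2)`, the bipartitions of 2) has exactly 5 elements.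
-/

/-- A partition: a weakly decreasing list of positive integers. -/
def IsPartitionList (l : List ℕ) : Prop :=
  l.Pairwise (· ≥ ·) ∧ ∀ x ∈ l, 0 < x

/-- The number of boxes `c ∈ {0, …, len-1}` of a single row whose (shifted) residue
`c + shift` equals `s` in `ℤ/ℓ`. -/
def rowResCount (ℓ : ℕ) (shift : ZMod ℓ) (len : ℕ) (s : ZMod ℓ) : ℕ :=
  ((List.range len).filter (fun c => ((c : ZMod ℓ) + shift = s : Prop))).length

/-- The `ℓ`-residue of a partition `lam`, shifted by `shift`. -/
def partResVec (ℓ : ℕ) (shift : ZMod ℓ) (lam : List ℕ) (s : ZMod ℓ) : ℕ :=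
  (lam.zipIdx.map (fun rc => rowResCount ℓ (shift - (rc.2 : ZMod ℓ)) rc.1 s)).sum

/-- The set `𝒬(n,ℓ)`. -/
def QSet (ℓ n : ℕ) [NeZero ℓ] : Set (List ℕ × (ZMod ℓ → List ℕ)) :=
  {p | IsPartitionList p.1 ∧ (∀ i, IsPartitionList (p.2 i)) ∧
    ∀ s : ZMod ℓ, partResVec ℓ 0 p.1 s + ∑ i : ZMod ℓ, partResVec ℓ i (p.2 i) s = n}

instance (l : List ℕ) : Decidable (IsPartitionList l) := by
  unfold IsPartitionList; infer_instance

lemma zmod2_cases (i : ZMod 2) : i = 0 ∨ i = 1 := by revert i; decide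

lemma zmod2_sum (g : ZMod 2 → ℕ) : ∑ s : ZMod 2, g s = g 0 + g 1 := by
  rw [show (Finset.univ : Finset (ZMod 2)) = {0, 1} by decide,
    Finset.sum_insert (by decide), Finset.sum_singleton]

lemma bind_eq_map (l : List ℕ) :
    (bind l fun a => (pure (a : ZMod 2) : List (ZMod 2)))
      = l.map (Nat.cast : ℕ → ZMod 2) := by
  induction l with
  | nil => rfl
  | cons a t ih =>
    simp only [List.map_cons, ← ih]
    rfl

lemma rowRes_total (shift : ZMod 2) (len : ℕ) :
    rowResCount 2 shift len 0 + rowResCount 2 shift len 1 = len := by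
  induction len with
  | zero => rfl
  | succ n ih =>
    unfold rowResCount at *
    rw [bind_eq_map] at *
    rw [List.range_succ, List.map_append, List.filter_append, List.filter_append,
      List.length_append, List.length_append]
    rcases zmod2_cases ((n : ZMod 2) + shift) with h | h <;>
      simp [h] <;> omega

lemma listsum (f : ℕ → ZMod 2) (L : List (ℕ × ℕ)) :
    (L.map (fun rc => rowResCount 2 (f rc.2) rc.1 0)).sum
      + (L.map (fun rc => rowResCount 2 (f rc.2) rc.1 1)).sum
      = (L.map Prod.fst).sum := by
  induction L with
  | nil => rfl
  | cons a t ih =>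
    simp only [List.map_cons, List.sum_cons]
    have := rowRes_total (f a.2) a.1
    omega

lemma partResVec_total (sh : ZMod 2) (lam : List ℕ) :
    partResVec 2 sh lam 0 + partResVec 2 sh lam 1 = lam.sum := by
  unfold partResVec
  rw [listsum (fun r => sh - (r : ZMod 2)) lam.zipIdx]
  rw [List.zipIdx_map_fst]

def P4 : List (List ℕ) :=
  [[], [1], [2], [1, 1], [3], [2, 1], [1, 1, 1], [4], [3, 1], [2, 2],
    [2, 1, 1], [1, 1, 1, 1]]

lemma mem_P4 (l : List ℕ) (hl : IsPartitionList l) (hs : l.sum ≤ 4) :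
    l ∈ P4 := by
  obtain ⟨hsort, hpos⟩ := hl
  match l with
  | [] => decide
  | [a] =>
    have := hpos a (by simp)
    simp at hs
    interval_cases a <;> decide
  | [a, b] =>
    have ha := hpos a (by simp); have hb := hpos b (by simp)
    rw [List.pairwise_cons] at hsort
    have hab : b ≤ a := hsort.1 b (by simp)
    simp at hs
    have ha4 : a ≤ 4 := by omega
    interval_cases a <;> (interval_cases b <;> first | decide | omega)
  | [a, b, c] =>
    have ha := hpos a (by simp); have hb := hpos b (by simp)
    have hc := hpos c (by simp)
    rw [List.pairwise_cons] at hsort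
    obtain ⟨h1, hsort⟩ := hsort
    rw [List.pairwise_cons] at hsort
    have hab : b ≤ a := h1 b (by simp)
    have hbc : c ≤ b := hsort.1 c (by simp)
    simp at hs
    have ha4 : a ≤ 4 := by omega
    interval_cases a <;> (interval_cases b <;> (interval_cases c <;>
      first | decide | omega))
  | [a, b, c, d] =>
    have ha := hpos a (by simp); have hb := hpos b (by simp)
    have hc := hpos c (by simp); have hd := hpos d (by simp)
    rw [List.pairwise_cons] at hsort
    obtain ⟨h1, hsort⟩ := hsort
    rw [List.pairwise_cons] at hsort
    obtain ⟨h2, hsort⟩ := hsort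
    rw [List.pairwise_cons] at hsort
    have hab : b ≤ a := h1 b (by simp)
    have hbc : c ≤ b := h2 c (by simp)
    have hcd : d ≤ c := hsort.1 d (by simp)
    simp at hs
    have ha4 : a ≤ 4 := by omega
    interval_cases a <;> (interval_cases b <;> (interval_cases c <;>
      (interval_cases d <;> first | decide | omega)))
  | a :: b :: c :: d :: e :: t =>
    have ha := hpos a (by simp); have hb := hpos b (by simp)
    have hc := hpos c (by simp); have hd := hpos d (by simp)
    have he := hpos e (by simp)
    simp at hs
    omega

def embed (t : List ℕ × List ℕ × List ℕ) : List ℕ × (ZMod 2 → List ℕ) :=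
  (t.1, fun i => if i = 0 then t.2.1 else t.2.2)

lemma embed_inj : Function.Injective embed := by
  intro t t' h
  simp only [embed, Prod.mk.injEq] at h
  obtain ⟨h1, h2⟩ := h
  have h20 := congrFun h2 0
  have h21 := congrFun h2 1
  simp at h20 h21
  exact Prod.ext h1 (Prod.ext h20 h21)

def Qcond (p : List ℕ × (ZMod 2 → List ℕ)) : Prop :=
  IsPartitionList p.1 ∧ (∀ i, IsPartitionList (p.2 i)) ∧
    ∀ s : ZMod 2, partResVec 2 0 p.1 s + ∑ i : ZMod 2, partResVec 2 i (p.2 i) s = 2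

instance : DecidablePred Qcond := fun p => by unfold Qcond; infer_instance

def G : Finset (List ℕ × List ℕ × List ℕ) :=
  (P4.toFinset ×ˢ P4.toFinset ×ˢ P4.toFinset).filter (fun t => Qcond (embed t))

lemma mem_Q_of_cond (p : List ℕ × (ZMod 2 → List ℕ)) (hp : p ∈ QSet 2 2) :
    (p.1, p.2 0, p.2 1) ∈ G ∧ embed (p.1, p.2 0, p.2 1) = p := by
  obtain ⟨h1, h2, h3⟩ := hp
  have hpe : embed (p.1, p.2 0, p.2 1) = p := by
    unfold embed
    refine Prod.ext rfl ?_
    funext i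
    rcases zmod2_cases i with h | h <;> simp [h]
  have htot := h3 0
  have htot1 := h3 1
  rw [zmod2_sum] at htot htot1
  have e1 := partResVec_total 0 p.1
  have e2 := partResVec_total 0 (p.2 0)
  have e3 := partResVec_total 1 (p.2 1)
  refine ⟨Finset.mem_filter.2 ⟨?_, ?_⟩, hpe⟩
  · refine Finset.mem_product.2 ⟨?_, Finset.mem_product.2 ⟨?_, ?_⟩⟩ <;>
      rw [List.mem_toFinset]
    · exact mem_P4 _ h1 (by show p.1.sum ≤ 4; omega)
    · exact mem_P4 _ (h2 0) (by show (p.2 0).sum ≤ 4; omega)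
    · exact mem_P4 _ (h2 1) (by show (p.2 1).sum ≤ 4; omega)
  · rw [hpe]; exact ⟨h1, h2, h3⟩

lemma QSet_eq : QSet 2 2 = ↑(G.image embed) := by
  ext p
  simp only [Finset.coe_image, Set.mem_image, Finset.mem_coe]
  constructor
  · intro hp
    obtain ⟨hg, hpe⟩ := mem_Q_of_cond p hp
    exact ⟨_, hg, hpe⟩
  · rintro ⟨t, ht, rfl⟩
    exact (Finset.mem_filter.1 ht).2

lemma G_card : G.card = 41 := by decide +kernel

lemma G2_card : ((G.filter (fun t => t.2.1 = [] ∧ t.2.2 = [])).card) = 5 := by decide +kernel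

lemma QSet2_eq : {p ∈ QSet 2 2 | ∀ i, p.2 i = []}
    = ↑((G.filter (fun t => t.2.1 = [] ∧ t.2.2 = [])).image embed) := by
  ext p
  simp only [Finset.coe_image, Set.mem_image, Finset.mem_coe, Finset.mem_filter,
    Set.mem_setOf_eq, Set.mem_sep_iff]
  constructor
  · rintro ⟨hp, hemp⟩
    obtain ⟨hg, hpe⟩ := mem_Q_of_cond p hp
    exact ⟨_, ⟨hg, hemp 0, hemp 1⟩, hpe⟩
  · rintro ⟨t, ⟨ht, he1, he2⟩, rfl⟩
    refine ⟨(Finset.mem_filter.1 ht).2, ?_⟩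
    intro i
    rcases zmod2_cases i with h | h <;> simp [embed, h, he1, he2]

theorem card_QSet_two_two :
    (QSet 2 2).ncard = 41 ∧
    {p ∈ QSet 2 2 | ∀ i, p.2 i = []}.ncard = 5 := by
  constructor
  · rw [QSet_eq, Set.ncard_coe_finset,
      Finset.card_image_of_injective _ embed_inj, G_card]
  · rw [QSet2_eq, Set.ncard_coe_finset,
      Finset.card_image_of_injective _ embed_inj, G2_card]
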